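/- Let s be the unilateral shift on ℓ²(ℕ) (s e_n = e_{n+1} for the standard orthonormal basis) and p = s s*. Then s* belongs to the p-sphere of the Hilbert module B(ℓ²(ℕ)) over itself (that is, (s*)* s* = s s* = p), but there is no isometry v ∈ B(ℓ²(ℕ)) (v*v = 1) with v·p = s*. (Hence the map m_p : S_1(B(H)) → S_p(B(H)), v ↦ v·p, need not be surjective.) -/

import Mathlib

/-- Evaluation at coordinate 0 as a continuous linear functional on `ℓ²(ℕ)`. -/
noncomputable def eval0 : lp (fun _ : ℕ => ℂ) 2 →L[ℂ] ℂ :=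
  LinearMap.mkContinuous
    { toFun := fun f => f 0
      map_add' := fun f g => by simp [lp.coeFn_add]
      map_smul' := fun c f => by simp [lp.coeFn_smul] }
    1 (fun f => by
      rw [one_mul]; exact lp.norm_apply_le_norm (by norm_num : (2 : ENNReal) ≠ 0) f 0)

theorem eval0_apply (f : lp (fun _ : ℕ => ℂ) 2) : eval0 f = f 0 := rfl

/-- The range of the shift has zero 0-th coordinate. -/
theorem eval0_shift (s : lp (fun _ : ℕ => ℂ) 2 →L[ℂ] lp (fun _ : ℕ => ℂ) 2)
    (hshift : ∀ n : ℕ, s (lp.single 2 n (1 : ℂ)) = lp.single 2 (n + 1) (1 : ℂ))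
    (y : lp (fun _ : ℕ => ℂ) 2) : eval0 (s y) = 0 := by
  have h1 : HasSum (fun n : ℕ => lp.single 2 n (y n)) y :=
    lp.hasSum_single (by norm_num) y
  have h2 : HasSum (fun n : ℕ => eval0 (s (lp.single 2 n (y n)))) (eval0 (s y)) :=
    ((eval0.comp s).hasSum h1 :)
  have h3 : ∀ n : ℕ, eval0 (s (lp.single 2 n (y n))) = 0 := by
    intro n
    have : lp.single 2 n (y n) = (y n • lp.single 2 n (1 : ℂ) : lp (fun _ : ℕ => ℂ) 2) := by
      rw [← lp.single_smul (E := fun _ : ℕ => ℂ) 2 n (y n) (1 : ℂ)]; simp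
    rw [this, map_smul, map_smul, hshift, eval0_apply, lp.single_apply_ne]
    · simp
    · omega
  have h4 : HasSum (fun _ : ℕ => (0 : ℂ)) (eval0 (s y)) := by
    simpa [h3] using h2
  simpa using h4.unique hasSum_zero

/-- The unilateral shift `s` on `ℓ²(ℕ)` and `p = s s*`: the co-isometry `s*` lies in
the `p`-sphere of `B(ℓ²(ℕ))` (that is, `(s*)* s* = s s* = p`), but there is no
isometry `v` with `v·p = s*`; hence `m_p : S₁(B(H)) → S_p(B(H))`, `v ↦ v·p`, need
not be surjective. -/
theorem shift_adjoint_not_in_range_of_mp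
    (s : lp (fun _ : ℕ => ℂ) 2 →L[ℂ] lp (fun _ : ℕ => ℂ) 2)
    (hshift : ∀ n : ℕ, s (lp.single 2 n (1 : ℂ)) = lp.single 2 (n + 1) (1 : ℂ))
    (hiso : star s * s = 1) :
    star (star s) * star s = s * star s ∧
      ¬ ∃ v : lp (fun _ : ℕ => ℂ) 2 →L[ℂ] lp (fun _ : ℕ => ℂ) 2,
        star v * v = 1 ∧ v * (s * star s) = star s := by
  refine ⟨by rw [star_star], ?_⟩
  rintro ⟨v, hv, hvp⟩
  -- v * s = 1
  have hvs : v * s = 1 := by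
    have := congrArg (· * s) hvp
    rw [mul_assoc, mul_assoc, hiso, mul_one] at this
    exact this
  -- star v = s
  have hsv : star v = s := by
    calc star v = star v * (v * s) := by rw [hvs, mul_one]
    _ = (star v * v) * s := by rw [mul_assoc]
    _ = s := by rw [hv, one_mul]
  have hv2 : v = star s := by rw [← hsv, star_star]
  -- hence s * star s = 1
  have hss : s * star s = 1 := by rw [hsv, hv2] at hv; exact hv
  -- contradiction at e₀
  have he : s (star s (lp.single 2 0 (1 : ℂ))) = lp.single 2 0 (1 : ℂ) := by
    have := congrArg (fun a => a (lp.single 2 0 (1 : ℂ))) hss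
    simpa using this
  have h0 : eval0 (lp.single 2 0 (1 : ℂ)) = 1 := by
    rw [eval0_apply, lp.single_apply_self]
  rw [← he, eval0_shift s hshift] at h0
  exact zero_ne_one h0
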